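/- Let A be an associative unital ℂ-algebra with the elements and relations described. Then for all s, t, p ∈ ℕ one has [J_s^⟨p⟩, X⁺_t] = Σ_{z=1}^{p} (−1)^{z+1}(z+1)·J_s^⟨p−z⟩·X_t^{+((z);s)}, and [J_s^⟨p⟩, X⁻_t] = −Σ_{z=1}^{p} (−1)^{z+1}(z+1)·X_t^{−((z);s)}·J_s^⟨p−z⟩. -/
import Mathlib


open Finset

/-- `X_t^{±((p);h)}`: for `p > 0`, `Σ_{w=0}^{p} C(p,w)·(−Q)^w·X_{t+p·h+w}`; for `p = 0`, `1`. -/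
noncomputable def Xbr {A : Type*} [Ring A] [Algebra ℂ A] (Q : ℂ) (X : ℕ → A) (t p h : ℕ) : A :=
  if p = 0 then 1
  else ∑ w ∈ Finset.range (p + 1), ((p.choose w : ℂ) * (-Q) ^ w) • X (t + p * h + w)

/-- `J_s^⟨p⟩`, defined recursively:
`J_s^⟨0⟩ = 1` and
`J_s^⟨p⟩ = (1/p)·Σ_{z=1}^{p} (−1)^{z−1}·(Σ_{w=0}^{z} C(z,w)·(−Q)^w·J_{z·s+w})·J_s^⟨p−z⟩`. -/
noncomputable def Jbr {A : Type*} [Ring A] [Algebra ℂ A] (Q : ℂ) (J : ℕ → A) (s : ℕ) : ℕ → A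
  | 0 => 1
  | p + 1 =>
      ((p : ℂ) + 1)⁻¹ •
        ∑ z ∈ Finset.range (p + 1),
          ((-1 : ℂ) ^ z) •
            ((∑ w ∈ Finset.range (z + 2),
                (((z + 1).choose w : ℂ) * (-Q) ^ w) • J ((z + 1) * s + w)) *
              Jbr Q J s (p - z))
  termination_by p => p
  decreasing_by omega

section Aux
variable {A : Type*} [Ring A] [Algebra ℂ A]

/-- iterated application of M = σ^s (1 - Q σ) to X, at base point t -/
noncomputable def Yf (Q : ℂ) (X : ℕ → A) (s : ℕ) : ℕ → ℕ → A
  | 0, t => X t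
  | (k+1), t => Yf Q X s k (t+s) - Q • Yf Q X s k (t+s+1)

/-- the Newton power sums -/
noncomputable def Pz (Q : ℂ) (J : ℕ → A) (s z : ℕ) : A :=
  ∑ w ∈ Finset.range (z + 2), (((z + 1).choose w : ℂ) * (-Q) ^ w) • J ((z + 1) * s + w)

lemma Jbr_succ (Q : ℂ) (J : ℕ → A) (s p : ℕ) :
    Jbr Q J s (p+1) = ((p : ℂ) + 1)⁻¹ •
      ∑ z ∈ Finset.range (p + 1), ((-1 : ℂ) ^ z) • (Pz Q J s z * Jbr Q J s (p - z)) := by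
  rw [Jbr]; rfl

lemma newton (Q : ℂ) (J : ℕ → A) (s p : ℕ) :
    ∑ z ∈ Finset.range (p + 1), ((-1 : ℂ) ^ z) • (Pz Q J s z * Jbr Q J s (p - z)) =
      ((p : ℂ) + 1) • Jbr Q J s (p+1) := by
  rw [Jbr_succ, smul_smul, mul_inv_cancel₀ (Nat.cast_add_one_ne_zero p), one_smul]

end Aux

section Aux2
variable {A : Type*} [Ring A] [Algebra ℂ A]

/-- binomial expansion of M^z applied at level k -/
lemma Yf_sum (Q : ℂ) (X : ℕ → A) (s : ℕ) :
    ∀ z k t, ∑ w ∈ Finset.range (z + 1),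
        ((z.choose w : ℂ) * (-Q) ^ w) • Yf Q X s k (t + z * s + w) = Yf Q X s (k + z) t := by
  intro z
  induction z with
  | zero => intro k t; simp
  | succ z ih =>
      intro k t
      have hR : Yf Q X s (k + (z+1)) t
          = Yf Q X s (k+z) (t+s) - Q • Yf Q X s (k+z) (t+s+1) := by
        show Yf Q X s ((k+z)+1) t = _
        rw [Yf]
      rw [hR]
      rw [Finset.sum_range_succ' (fun w => (((z+1).choose w : ℂ) * (-Q) ^ w) •
            Yf Q X s k (t + (z+1) * s + w))]
      have hsplit : ∀ w, (((z+1).choose (w+1) : ℂ) * (-Q) ^ (w+1)) •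
            Yf Q X s k (t + (z+1) * s + (w+1))
          = ((z.choose (w+1) : ℂ) * (-Q) ^ (w+1)) • Yf Q X s k (t + (z+1) * s + (w+1))
            + ((z.choose w : ℂ) * (-Q) ^ (w+1)) • Yf Q X s k (t + (z+1) * s + (w+1)) := by
        intro w
        rw [← add_smul, ← add_mul, Nat.choose_succ_succ' z w]
        push_cast; ring_nf
      rw [Finset.sum_congr rfl (fun w _ => hsplit w), Finset.sum_add_distrib]
      have e1 : (∑ w ∈ Finset.range (z+1), ((z.choose (w+1) : ℂ) * (-Q) ^ (w+1)) •
            Yf Q X s k (t + (z+1) * s + (w+1)))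
          + (((z+1).choose 0 : ℂ) * (-Q) ^ 0) • Yf Q X s k (t + (z+1) * s + 0)
          = Yf Q X s (k+z) (t+s) := by
        rw [← ih k (t+s)]
        rw [Finset.sum_range_succ' (fun w => ((z.choose w : ℂ) * (-Q) ^ w) •
              Yf Q X s k (t + s + z * s + w))]
        rw [Finset.sum_range_succ]
        simp only [Nat.choose_succ_self, Nat.cast_zero, zero_mul, zero_smul, add_zero]
        congr 1
        · exact Finset.sum_congr rfl fun w _ => by congr 3; ring
        · congr 2
          · norm_num
          · ring
      have e2 : ∑ w ∈ Finset.range (z+1), ((z.choose w : ℂ) * (-Q) ^ (w+1)) •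
            Yf Q X s k (t + (z+1) * s + (w+1))
          = -(Q • Yf Q X s (k+z) (t+s+1)) := by
        rw [← ih k (t+s+1), Finset.smul_sum, ← Finset.sum_neg_distrib]
        exact Finset.sum_congr rfl fun w _ => by
          have h : t + s + 1 + z * s + w = t + (z+1) * s + (w+1) := by ring
          rw [smul_smul, ← neg_smul, h]
          congr 1; ring
      rw [e2, ← e1]
      abel
end Aux2

section Aux3
variable {A : Type*} [Ring A] [Algebra ℂ A]

lemma Yf_comm (Q : ℂ) (X J : ℕ → A) (s : ℕ)
    (hL2 : ∀ a b, J a * X b - X b * J a = (2 : ℂ) • X (a + b)) :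
    ∀ k r t, J r * Yf Q X s k t - Yf Q X s k t * J r = (2 : ℂ) • Yf Q X s k (t + r) := by
  intro k
  induction k with
  | zero =>
      intro r t
      show J r * X t - X t * J r = (2 : ℂ) • X (t + r)
      rw [add_comm t r]; exact hL2 r t
  | succ k ih =>
      intro r t
      show J r * (Yf Q X s k (t+s) - Q • Yf Q X s k (t+s+1))
          - (Yf Q X s k (t+s) - Q • Yf Q X s k (t+s+1)) * J r
          = (2:ℂ) • (Yf Q X s k (t+r+s) - Q • Yf Q X s k (t+r+s+1))
      have h1 := ih r (t+s)
      have h2 := ih r (t+s+1)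
      have e1 : t + s + r = t + r + s := by omega
      have e2 : t + s + 1 + r = t + r + s + 1 := by omega
      rw [e1] at h1; rw [e2] at h2
      simp only [mul_sub, sub_mul, mul_smul_comm, smul_mul_assoc]
      linear_combination (norm := module) h1 - Q • h2

lemma Pz_comm_Yf (Q : ℂ) (X J : ℕ → A) (s : ℕ)
    (hL2 : ∀ a b, J a * X b - X b * J a = (2 : ℂ) • X (a + b)) (z k t : ℕ) :
    Pz Q J s z * Yf Q X s k t - Yf Q X s k t * Pz Q J s z
      = (2 : ℂ) • Yf Q X s (k + z + 1) t := by
  unfold Pz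
  rw [Finset.sum_mul, Finset.mul_sum, ← Finset.sum_sub_distrib]
  have : ∀ w ∈ Finset.range (z+2),
      (((z+1).choose w : ℂ) * (-Q) ^ w) • J ((z+1)*s + w) * Yf Q X s k t
        - Yf Q X s k t * ((((z+1).choose w : ℂ) * (-Q) ^ w) • J ((z+1)*s + w))
      = (2:ℂ) • ((((z+1).choose w : ℂ) * (-Q) ^ w) • Yf Q X s k (t + (z+1)*s + w)) := by
    intro w _
    rw [smul_mul_assoc, mul_smul_comm, ← smul_sub, Yf_comm Q X J s hL2 k ((z+1)*s+w) t]
    rw [smul_comm]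
    congr 2
    ring
  rw [Finset.sum_congr rfl this, ← Finset.smul_sum, Yf_sum Q X s (z+1) k t]
  rw [← add_assoc]

lemma J_comm_Jbr (Q : ℂ) (J : ℕ → A) (s : ℕ)
    (hL1 : ∀ a b, J a * J b = J b * J a) :
    ∀ p r, J r * Jbr Q J s p = Jbr Q J s p * J r := by
  intro p
  induction p using Nat.strong_induction_on with
  | _ p ih =>
    match p with
    | 0 => intro r; rw [show Jbr Q J s 0 = 1 by rw [Jbr], mul_one, one_mul]
    | p + 1 =>
      intro r
      have hP : ∀ z, J r * Pz Q J s z = Pz Q J s z * J r := by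
        intro z
        unfold Pz
        rw [Finset.mul_sum, Finset.sum_mul]
        exact Finset.sum_congr rfl fun w _ => by
          rw [mul_smul_comm, smul_mul_assoc, hL1]
      rw [Jbr_succ, mul_smul_comm, smul_mul_assoc, Finset.mul_sum, Finset.sum_mul]
      congr 1
      refine Finset.sum_congr rfl fun z _ => ?_
      rw [mul_smul_comm, smul_mul_assoc, ← mul_assoc, hP, mul_assoc,
        ih (p - z) (by omega) r, ← mul_assoc]

lemma Pz_comm_Jbr (Q : ℂ) (J : ℕ → A) (s : ℕ)
    (hL1 : ∀ a b, J a * J b = J b * J a) (z q : ℕ) :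
    Pz Q J s z * Jbr Q J s q = Jbr Q J s q * Pz Q J s z := by
  unfold Pz
  rw [Finset.sum_mul, Finset.mul_sum]
  exact Finset.sum_congr rfl fun w _ => by
    rw [smul_mul_assoc, mul_smul_comm, J_comm_Jbr Q J s hL1]

end Aux3

lemma tri {M : Type*} [AddCommMonoid M] (n : ℕ) (f : ℕ → ℕ → M) :
    ∑ z ∈ Finset.range n, ∑ y ∈ Finset.range (n - z), f z y
      = ∑ m ∈ Finset.range n, ∑ z ∈ Finset.range (m + 1), f z (m - z) := by
  induction n with
  | zero => simp
  | succ n ih =>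
      have h1 : ∀ z ∈ Finset.range (n+1), ∑ y ∈ Finset.range (n+1-z), f z y
          = ∑ y ∈ Finset.range (n-z), f z y + f z (n-z) := by
        intro z hz
        have hz' := Finset.mem_range.mp hz
        rw [show n+1-z = (n-z)+1 by omega, Finset.sum_range_succ]
      rw [Finset.sum_congr rfl h1, Finset.sum_add_distrib,
        Finset.sum_range_succ (fun z => ∑ y ∈ Finset.range (n-z), f z y)]
      simp only [Nat.sub_self, Finset.range_zero, Finset.sum_empty, add_zero]
      rw [ih, Finset.sum_range_succ (fun m => ∑ z ∈ Finset.range (m+1), f z (m - z)),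
        Finset.sum_range_succ (fun z => f z (n - z))]

section Main
variable {A : Type*} [Ring A] [Algebra ℂ A]

lemma main_plus (Q : ℂ) (X J : ℕ → A) (s : ℕ)
    (hL2 : ∀ a b, J a * X b - X b * J a = (2 : ℂ) • X (a + b)) :
    ∀ p k t, Jbr Q J s p * Yf Q X s k t - Yf Q X s k t * Jbr Q J s p
      = ∑ z ∈ Finset.range p, ((-1 : ℂ) ^ z * ((z : ℂ) + 2)) •
          (Jbr Q J s (p - (z + 1)) * Yf Q X s (k + z + 1) t) := by
  intro p
  induction p using Nat.strong_induction_on with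
  | _ p ih =>
    match p with
    | 0 =>
        intro k t
        rw [show Jbr Q J s 0 = 1 by rw [Jbr], mul_one, one_mul, sub_self,
          Finset.range_zero, Finset.sum_empty]
    | p + 1 =>
      intro k t
      have hS : (∑ z ∈ Finset.range (p+1), ((-1:ℂ)^z) • (Pz Q J s z * Jbr Q J s (p-z)))
            * Yf Q X s k t
          - Yf Q X s k t *
            (∑ z ∈ Finset.range (p+1), ((-1:ℂ)^z) • (Pz Q J s z * Jbr Q J s (p-z)))
          = ((p:ℂ)+1) • ∑ z ∈ Finset.range (p+1),
              ((-1:ℂ)^z * ((z:ℂ)+2)) • (Jbr Q J s (p-z) * Yf Q X s (k+z+1) t) := by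
        have key : ∀ z ∈ Finset.range (p+1),
            Pz Q J s z * Jbr Q J s (p-z) * Yf Q X s k t
              - Yf Q X s k t * (Pz Q J s z * Jbr Q J s (p-z))
            = Pz Q J s z * (∑ y ∈ Finset.range (p-z), ((-1:ℂ)^y * ((y:ℂ)+2)) •
                  (Jbr Q J s (p-z-(y+1)) * Yf Q X s (k+y+1) t))
              + (2:ℂ) • (Jbr Q J s (p-z) * Yf Q X s (k+z+1) t)
              - (2:ℂ) • (∑ y ∈ Finset.range (p-z), ((-1:ℂ)^y * ((y:ℂ)+2)) •
                  (Jbr Q J s (p-z-(y+1)) * Yf Q X s (k+z+1+y+1) t)) := by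
          intro z hz
          have h1 := ih (p-z) (by omega) k t
          have h2 := ih (p-z) (by omega) (k+z+1) t
          have h3 := Pz_comm_Yf Q X J s hL2 z k t
          have h4 : Yf Q X s (k+z+1) t * Jbr Q J s (p-z)
              = Jbr Q J s (p-z) * Yf Q X s (k+z+1) t
                - ∑ y ∈ Finset.range (p-z), ((-1:ℂ)^y * ((y:ℂ)+2)) •
                    (Jbr Q J s (p-z-(y+1)) * Yf Q X s (k+z+1+y+1) t) := by
            rw [← h2]; abel
          calc Pz Q J s z * Jbr Q J s (p-z) * Yf Q X s k t
                - Yf Q X s k t * (Pz Q J s z * Jbr Q J s (p-z))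
              = Pz Q J s z * (Jbr Q J s (p-z) * Yf Q X s k t
                    - Yf Q X s k t * Jbr Q J s (p-z))
                  + (Pz Q J s z * Yf Q X s k t - Yf Q X s k t * Pz Q J s z)
                    * Jbr Q J s (p-z) := by noncomm_ring
            _ = Pz Q J s z * (∑ y ∈ Finset.range (p-z), ((-1:ℂ)^y * ((y:ℂ)+2)) •
                    (Jbr Q J s (p-z-(y+1)) * Yf Q X s (k+y+1) t))
                  + ((2:ℂ) • Yf Q X s (k+z+1) t) * Jbr Q J s (p-z) := by
                rw [h1, h3]
            _ = _ := by
                rw [smul_mul_assoc, h4, smul_sub]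
                abel
        calc (∑ z ∈ Finset.range (p+1), ((-1:ℂ)^z) • (Pz Q J s z * Jbr Q J s (p-z)))
              * Yf Q X s k t
            - Yf Q X s k t *
              (∑ z ∈ Finset.range (p+1), ((-1:ℂ)^z) • (Pz Q J s z * Jbr Q J s (p-z)))
            = ∑ z ∈ Finset.range (p+1), ((-1:ℂ)^z) •
                (Pz Q J s z * Jbr Q J s (p-z) * Yf Q X s k t
                  - Yf Q X s k t * (Pz Q J s z * Jbr Q J s (p-z))) := by
              rw [Finset.sum_mul, Finset.mul_sum, ← Finset.sum_sub_distrib]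
              exact Finset.sum_congr rfl fun z _ => by
                rw [smul_mul_assoc, mul_smul_comm, ← smul_sub]
          _ = ∑ z ∈ Finset.range (p+1), ((-1:ℂ)^z) •
                (Pz Q J s z * (∑ y ∈ Finset.range (p-z), ((-1:ℂ)^y * ((y:ℂ)+2)) •
                      (Jbr Q J s (p-z-(y+1)) * Yf Q X s (k+y+1) t))
                  + (2:ℂ) • (Jbr Q J s (p-z) * Yf Q X s (k+z+1) t)
                  - (2:ℂ) • (∑ y ∈ Finset.range (p-z), ((-1:ℂ)^y * ((y:ℂ)+2)) •
                      (Jbr Q J s (p-z-(y+1)) * Yf Q X s (k+z+1+y+1) t))) :=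
              Finset.sum_congr rfl fun z hz => by rw [key z hz]
          _ = (∑ z ∈ Finset.range (p+1), ((-1:ℂ)^z) •
                (Pz Q J s z * (∑ y ∈ Finset.range (p-z), ((-1:ℂ)^y * ((y:ℂ)+2)) •
                      (Jbr Q J s (p-z-(y+1)) * Yf Q X s (k+y+1) t))))
              + (∑ z ∈ Finset.range (p+1), ((-1:ℂ)^z) •
                  ((2:ℂ) • (Jbr Q J s (p-z) * Yf Q X s (k+z+1) t)))
              - (∑ z ∈ Finset.range (p+1), ((-1:ℂ)^z) •
                  ((2:ℂ) • (∑ y ∈ Finset.range (p-z), ((-1:ℂ)^y * ((y:ℂ)+2)) •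
                      (Jbr Q J s (p-z-(y+1)) * Yf Q X s (k+z+1+y+1) t)))) := by
              simp only [smul_sub, smul_add]
              rw [Finset.sum_sub_distrib, Finset.sum_add_distrib]
          _ = ((p:ℂ)+1) • ∑ z ∈ Finset.range (p+1),
                ((-1:ℂ)^z * ((z:ℂ)+2)) • (Jbr Q J s (p-z) * Yf Q X s (k+z+1) t) := by
              have hA1 : (∑ z ∈ Finset.range (p+1), ((-1:ℂ)^z) •
                    (Pz Q J s z * (∑ y ∈ Finset.range (p-z), ((-1:ℂ)^y * ((y:ℂ)+2)) •
                        (Jbr Q J s (p-z-(y+1)) * Yf Q X s (k+y+1) t))))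
                  = ∑ y ∈ Finset.range (p+1), ((-1:ℂ)^y * ((y:ℂ)+2) * ((p:ℂ) - (y:ℂ))) •
                      (Jbr Q J s (p-y) * Yf Q X s (k+y+1) t) := by
                have hstepA : (∑ z ∈ Finset.range (p+1), ((-1:ℂ)^z) •
                      (Pz Q J s z * (∑ y ∈ Finset.range (p-z), ((-1:ℂ)^y * ((y:ℂ)+2)) •
                          (Jbr Q J s (p-z-(y+1)) * Yf Q X s (k+y+1) t))))
                    = ∑ z ∈ Finset.range (p+1), ∑ y ∈ Finset.range (p-z),
                        ((-1:ℂ)^z * ((-1:ℂ)^y * ((y:ℂ)+2))) •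
                          (Pz Q J s z * Jbr Q J s (p-z-(y+1)) * Yf Q X s (k+y+1) t) := by
                  refine Finset.sum_congr rfl fun z _ => ?_
                  rw [Finset.mul_sum, Finset.smul_sum]
                  refine Finset.sum_congr rfl fun y _ => ?_
                  rw [mul_smul_comm, smul_smul,
                    ← mul_assoc (Pz Q J s z) (Jbr Q J s (p-z-(y+1)))]
                have hswap : (∑ z ∈ Finset.range (p+1), ∑ y ∈ Finset.range (p-z),
                        ((-1:ℂ)^z * ((-1:ℂ)^y * ((y:ℂ)+2))) •
                          (Pz Q J s z * Jbr Q J s (p-z-(y+1)) * Yf Q X s (k+y+1) t))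
                    = ∑ y ∈ Finset.range p, ∑ z ∈ Finset.range (p-y),
                        ((-1:ℂ)^z * ((-1:ℂ)^y * ((y:ℂ)+2))) •
                          (Pz Q J s z * Jbr Q J s (p-z-(y+1)) * Yf Q X s (k+y+1) t) :=
                  Finset.sum_comm' (fun z y => by simp only [Finset.mem_range]; omega)
                rw [hstepA, hswap]
                have hinner : ∀ y ∈ Finset.range p,
                    (∑ z ∈ Finset.range (p-y),
                        ((-1:ℂ)^z * ((-1:ℂ)^y * ((y:ℂ)+2))) •
                          (Pz Q J s z * Jbr Q J s (p-z-(y+1)) * Yf Q X s (k+y+1) t))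
                    = ((-1:ℂ)^y * ((y:ℂ)+2) * ((p:ℂ) - (y:ℂ))) •
                        (Jbr Q J s (p-y) * Yf Q X s (k+y+1) t) := by
                  intro y hy
                  have hy' := Finset.mem_range.mp hy
                  rw [show p - y = (p-(y+1))+1 by omega]
                  have hterm : ∀ z ∈ Finset.range ((p-(y+1))+1),
                      ((-1:ℂ)^z * ((-1:ℂ)^y * ((y:ℂ)+2))) •
                          (Pz Q J s z * Jbr Q J s (p-z-(y+1)) * Yf Q X s (k+y+1) t)
                      = ((-1:ℂ)^y * ((y:ℂ)+2)) •
                          ((((-1:ℂ)^z) • (Pz Q J s z * Jbr Q J s ((p-(y+1))-z))) *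
                            Yf Q X s (k+y+1) t) := by
                    intro z hz
                    rw [show p-z-(y+1) = (p-(y+1))-z by omega, smul_mul_assoc, smul_smul]
                    congr 1
                    ring
                  rw [Finset.sum_congr rfl hterm, ← Finset.smul_sum, ← Finset.sum_mul,
                    newton Q J s (p-(y+1)), show p-(y+1)+1 = p-y by omega,
                    smul_mul_assoc, smul_smul]
                  congr 1
                  rw [Nat.cast_sub (by omega : y+1 ≤ p)]
                  push_cast
                  ring
                rw [Finset.sum_congr rfl hinner, Finset.sum_range_succ]
                simp only [sub_self, mul_zero, zero_smul, add_zero]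
              have hA2 : (∑ z ∈ Finset.range (p+1), ((-1:ℂ)^z) •
                      ((2:ℂ) • (Jbr Q J s (p-z) * Yf Q X s (k+z+1) t)))
                  = ∑ z ∈ Finset.range (p+1), ((-1:ℂ)^z * 2) •
                      (Jbr Q J s (p-z) * Yf Q X s (k+z+1) t) :=
                Finset.sum_congr rfl fun z _ => smul_smul _ _ _
              have hA3 : (∑ z ∈ Finset.range (p+1), ((-1:ℂ)^z) •
                      ((2:ℂ) • (∑ y ∈ Finset.range (p-z), ((-1:ℂ)^y * ((y:ℂ)+2)) •
                          (Jbr Q J s (p-z-(y+1)) * Yf Q X s (k+z+1+y+1) t))))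
                  = ∑ m ∈ Finset.range p, ((-1:ℂ)^m * (((m+1)*(m+4) : ℕ) : ℂ)) •
                      (Jbr Q J s (p-(m+1)) * Yf Q X s (k+(m+1)+1) t) := by
                have hstepA : (∑ z ∈ Finset.range (p+1), ((-1:ℂ)^z) •
                      ((2:ℂ) • (∑ y ∈ Finset.range (p-z), ((-1:ℂ)^y * ((y:ℂ)+2)) •
                          (Jbr Q J s (p-z-(y+1)) * Yf Q X s (k+z+1+y+1) t))))
                    = ∑ z ∈ Finset.range (p+1), ∑ y ∈ Finset.range (p-z),
                        ((-1:ℂ)^z * 2 * ((-1:ℂ)^y * ((y:ℂ)+2))) •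
                          (Jbr Q J s (p-z-(y+1)) * Yf Q X s (k+z+1+y+1) t) := by
                  refine Finset.sum_congr rfl fun z _ => ?_
                  rw [smul_smul, Finset.smul_sum]
                  exact Finset.sum_congr rfl fun y _ => smul_smul _ _ _
                rw [hstepA, Finset.sum_range_succ]
                simp only [Nat.sub_self, Finset.range_zero, Finset.sum_empty, add_zero]
                rw [tri p (fun z y => ((-1:ℂ)^z * 2 * ((-1:ℂ)^y * ((y:ℂ)+2))) •
                      (Jbr Q J s (p-z-(y+1)) * Yf Q X s (k+z+1+y+1) t))]
                refine Finset.sum_congr rfl fun m hm => ?_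
                have hterm : ∀ z ∈ Finset.range (m+1),
                    ((-1:ℂ)^z * 2 * ((-1:ℂ)^(m-z) * (((m-z : ℕ):ℂ)+2))) •
                        (Jbr Q J s (p-z-((m-z)+1)) * Yf Q X s (k+z+1+(m-z)+1) t)
                    = ((-1:ℂ)^m * (2 * (((m-z : ℕ):ℂ)+2))) •
                        (Jbr Q J s (p-(m+1)) * Yf Q X s (k+(m+1)+1) t) := by
                  intro z hz
                  have hz' := Finset.mem_range.mp hz
                  have hsgn : (-1:ℂ)^z * (-1:ℂ)^(m-z) = (-1:ℂ)^m := by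
                    rw [← pow_add]; congr 1; omega
                  rw [show p-z-((m-z)+1) = p-(m+1) by omega,
                    show k+z+1+(m-z)+1 = k+(m+1)+1 by omega]
                  congr 1
                  calc (-1:ℂ)^z * 2 * ((-1:ℂ)^(m-z) * (((m-z : ℕ):ℂ)+2))
                      = ((-1:ℂ)^z * (-1:ℂ)^(m-z)) * (2 * (((m-z : ℕ):ℂ)+2)) := by ring
                    _ = (-1:ℂ)^m * (2 * (((m-z : ℕ):ℂ)+2)) := by rw [hsgn]
                rw [Finset.sum_congr rfl hterm, ← Finset.sum_smul]
                congr 1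
                have hrefl : (∑ z ∈ Finset.range (m+1), (m - z)) = ∑ j ∈ Finset.range (m+1), j := by
                  simpa using Finset.sum_range_reflect (fun j => j) (m+1)
                have hgauss := Finset.sum_range_id_mul_two (m+1)
                have hN : (∑ z ∈ Finset.range (m+1), 2*((m-z)+2)) = (m+1)*(m+4) := by
                  have h2 : (∑ z ∈ Finset.range (m+1), 2*((m-z)+2))
                      = 2*(∑ z ∈ Finset.range (m+1), (m-z)) + 4*(m+1) := by
                    rw [Finset.sum_congr rfl (fun z _ => (by ring : 2*((m-z)+2) = 2*(m-z)+4)),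
                      Finset.sum_add_distrib, ← Finset.mul_sum, Finset.sum_const,
                      Finset.card_range, smul_eq_mul]
                    ring
                  rw [h2, hrefl, mul_comm 2, hgauss]
                  simp only [Nat.add_sub_cancel]
                  ring
                calc (∑ z ∈ Finset.range (m+1), (-1:ℂ)^m * (2 * (((m-z : ℕ):ℂ)+2)))
                    = (-1:ℂ)^m * (∑ z ∈ Finset.range (m+1), (2 * (((m-z : ℕ):ℂ)+2))) := by
                      rw [Finset.mul_sum]
                  _ = (-1:ℂ)^m * ((((m+1)*(m+4) : ℕ)) : ℂ) := by
                      rw [← hN, Nat.cast_sum]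
                      congr 1
                      exact Finset.sum_congr rfl fun z _ => by push_cast; ring
              rw [hA1, hA2, hA3]
              have hT : (((p:ℂ)+1) • ∑ z ∈ Finset.range (p+1),
                    ((-1:ℂ)^z * ((z:ℂ)+2)) • (Jbr Q J s (p-z) * Yf Q X s (k+z+1) t))
                  = ∑ z ∈ Finset.range (p+1), (((p:ℂ)+1) * ((-1:ℂ)^z * ((z:ℂ)+2))) •
                      (Jbr Q J s (p-z) * Yf Q X s (k+z+1) t) := by
                rw [Finset.smul_sum]
                exact Finset.sum_congr rfl fun z _ => smul_smul _ _ _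
              rw [hT, sub_eq_iff_eq_add, ← Finset.sum_add_distrib,
                Finset.sum_range_succ' (fun z => ((-1:ℂ)^z * ((z:ℂ)+2) * ((p:ℂ) - (z:ℂ))) •
                    (Jbr Q J s (p-z) * Yf Q X s (k+z+1) t)
                  + ((-1:ℂ)^z * 2) • (Jbr Q J s (p-z) * Yf Q X s (k+z+1) t)),
                Finset.sum_range_succ' (fun z => (((p:ℂ)+1) * ((-1:ℂ)^z * ((z:ℂ)+2))) •
                    (Jbr Q J s (p-z) * Yf Q X s (k+z+1) t)),
                add_right_comm (∑ m ∈ Finset.range p,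
                    (((p:ℂ)+1) * ((-1:ℂ)^(m+1) * (((m+1 : ℕ):ℂ)+2))) •
                      (Jbr Q J s (p-(m+1)) * Yf Q X s (k+(m+1)+1) t)),
                ← Finset.sum_add_distrib]
              congr 1
              · refine Finset.sum_congr rfl fun m _ => ?_
                rw [← add_smul, ← add_smul]
                congr 1
                push_cast
                ring
              · rw [← add_smul]
                congr 1
                push_cast
                ring
      rw [Jbr_succ Q J s p, smul_mul_assoc, mul_smul_comm, ← smul_sub, hS, smul_smul,
        inv_mul_cancel₀ (Nat.cast_add_one_ne_zero p), one_smul]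
      exact Finset.sum_congr rfl fun z hz => by
        congr 3
        omega

end Main

section Transfer
variable {A : Type*} [Ring A] [Algebra ℂ A]

lemma Xbr_eq_Yf (Q : ℂ) (X : ℕ → A) (s z t : ℕ) :
    Xbr Q X t (z+1) s = Yf Q X s (z+1) t := by
  have h := Yf_sum Q X s (z+1) 0 t
  rw [Nat.zero_add] at h
  rw [Xbr, if_neg (Nat.succ_ne_zero z), ← h]
  exact Finset.sum_congr rfl fun w _ => rfl

/-- the "plus" statement -/
lemma stmt_plus (Q : ℂ) (Xp J : ℕ → A)
    (hL2p : ∀ s t, J s * Xp t - Xp t * J s = (2 : ℂ) • Xp (s + t)) (s t p : ℕ) :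
    Jbr Q J s p * Xp t - Xp t * Jbr Q J s p =
      ∑ z ∈ Finset.range p, ((-1 : ℂ) ^ (z + 2) * ((z : ℂ) + 2)) •
        (Jbr Q J s (p - (z + 1)) * Xbr Q Xp t (z + 1) s) := by
  have h := main_plus Q Xp J s hL2p p 0 t
  rw [show Yf Q Xp s 0 t = Xp t from rfl] at h
  rw [h]
  refine Finset.sum_congr rfl fun z hz => ?_
  rw [Xbr_eq_Yf Q Xp s z t, show 0+z+1 = z+1 by omega]
  congr 1
  ring

lemma op_Pz (Q : ℂ) (J : ℕ → A) (s z : ℕ) :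
    MulOpposite.op (Pz Q J s z) = Pz Q (fun n => MulOpposite.op (J n)) s z := by
  unfold Pz
  rw [op_sum]
  exact Finset.sum_congr rfl fun w _ => rfl

lemma op_Jbr (Q : ℂ) (J : ℕ → A) (s : ℕ)
    (hL1 : ∀ a b, J a * J b = J b * J a) :
    ∀ p, MulOpposite.op (Jbr Q J s p) = Jbr Q (fun n => MulOpposite.op (J n)) s p := by
  intro p
  induction p using Nat.strong_induction_on with
  | _ p ih =>
    match p with
    | 0 =>
        rw [show Jbr Q J s 0 = 1 by rw [Jbr],
          show Jbr Q (fun n => MulOpposite.op (J n)) s 0 = 1 by rw [Jbr],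
          MulOpposite.op_one]
    | p + 1 =>
        rw [Jbr_succ, Jbr_succ, MulOpposite.op_smul, op_sum]
        congr 1
        refine Finset.sum_congr rfl fun z _ => ?_
        rw [MulOpposite.op_smul, Pz_comm_Jbr Q J s hL1 z (p - z), MulOpposite.op_mul,
          op_Pz, ih (p - z) (by omega)]

lemma op_Xbr (Q : ℂ) (X : ℕ → A) (t z s : ℕ) :
    MulOpposite.op (Xbr Q X t (z+1) s) = Xbr Q (fun n => MulOpposite.op (X n)) t (z+1) s := by
  rw [Xbr, Xbr, if_neg (Nat.succ_ne_zero z), if_neg (Nat.succ_ne_zero z), op_sum]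
  exact Finset.sum_congr rfl fun w _ => rfl

end Transfer

theorem stmt0 {A : Type*} [Ring A] [Algebra ℂ A] (Q : ℂ) (Xp Xm J : ℕ → A)
    (hL1 : ∀ s t, J s * J t = J t * J s)
    (hL2p : ∀ s t, J s * Xp t - Xp t * J s = (2 : ℂ) • Xp (s + t))
    (hL2m : ∀ s t, J s * Xm t - Xm t * J s = -((2 : ℂ) • Xm (s + t)))
    (hL3 : ∀ s t, Xp t * Xm s - Xm s * Xp t = J (s + t) - Q • J (s + t + 1))
    (hL4p : ∀ s t, Xp t * Xp s = Xp s * Xp t)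
    (hL4m : ∀ s t, Xm t * Xm s = Xm s * Xm t)
    (s t p : ℕ) :
    (Jbr Q J s p * Xp t - Xp t * Jbr Q J s p =
      ∑ z ∈ Finset.range p,
        ((-1 : ℂ) ^ (z + 2) * ((z : ℂ) + 2)) •
          (Jbr Q J s (p - (z + 1)) * Xbr Q Xp t (z + 1) s)) ∧
    (Jbr Q J s p * Xm t - Xm t * Jbr Q J s p =
      -∑ z ∈ Finset.range p,
        ((-1 : ℂ) ^ (z + 2) * ((z : ℂ) + 2)) •
          (Xbr Q Xm t (z + 1) s * Jbr Q J s (p - (z + 1)))) := by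
  constructor
  · exact stmt_plus Q Xp J hL2p s t p
  · have hL2' : ∀ a b, (fun n => MulOpposite.op (J n)) a * (fun n => MulOpposite.op (Xm n)) b
        - (fun n => MulOpposite.op (Xm n)) b * (fun n => MulOpposite.op (J n)) a
        = (2 : ℂ) • (fun n => MulOpposite.op (Xm n)) (a + b) := by
      intro a b
      have hm := hL2m a b
      have hswap : Xm b * J a - J a * Xm b = (2 : ℂ) • Xm (a + b) := by
        rw [← neg_sub, hm, neg_neg]
      show MulOpposite.op (J a) * MulOpposite.op (Xm b)
          - MulOpposite.op (Xm b) * MulOpposite.op (J a)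
          = (2 : ℂ) • MulOpposite.op (Xm (a + b))
      rw [← MulOpposite.op_mul, ← MulOpposite.op_mul, ← MulOpposite.op_sub, hswap]
      rfl
    have h := stmt_plus Q (fun n => MulOpposite.op (Xm n)) (fun n => MulOpposite.op (J n))
      hL2' s t p
    simp only [← op_Jbr Q J s hL1, ← op_Xbr Q Xm] at h
    simp only [← MulOpposite.op_mul, ← MulOpposite.op_smul, ← op_sum, ← MulOpposite.op_sub] at h
    have h2 := MulOpposite.op_injective h
    rw [← h2, neg_sub]
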